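/- arXiv:1108.3060 — 3 statements merged into one kernel-verified Lean document; each statement's English description precedes it below -/
import Mathlib

section
/- Let C be a monoidal category, A a category, and (F, u) a commutator functor from C to A. Then for every object X of C, the endomorphism of F(X) given by the composite F(ρ_X⁻¹) ≫ u_{X,𝟙} ≫ F(λ_X) : F(X) → F(X⊗𝟙) → F(𝟙⊗X) → F(X) (where ρ and λ are the right and left unitors) is an idempotent, and hence equals the identity morphism of F(X). -/
open CategoryTheory MonoidalCategory

/-- A commutator functor from a monoidal category `C` to a category `A`:
a functor `F : C ⥤ A` equipped with isomorphisms `u X Y : F(X ⊗ Y) ≅ F(Y ⊗ X)`,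
natural in `X` and `Y`, satisfying the hexagon compatibility with the associator. -/
structure CommutatorStruct {C : Type*} [Category C] [MonoidalCategory C]
    {A : Type*} [Category A] (F : C ⥤ A) where
  u : ∀ X Y : C, F.obj (X ⊗ Y) ≅ F.obj (Y ⊗ X)
  naturality : ∀ {X X' Y Y' : C} (f : X ⟶ X') (g : Y ⟶ Y'),
    F.map (f ⊗ₘ g) ≫ (u X' Y').hom = (u X Y).hom ≫ F.map (g ⊗ₘ f)
  hexagon : ∀ X Y Z : C,
    F.map (α_ X Y Z).hom ≫ (u X (Y ⊗ Z)).hom ≫ F.map (α_ Y Z X).hom =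
      (u (X ⊗ Y) Z).hom ≫ F.map (α_ Z X Y).inv ≫ (u (Z ⊗ X) Y).hom

theorem commutator_u_unit
    {C : Type*} [Category C] [MonoidalCategory C] {A : Type*} [Category A]
    (F : C ⥤ A) (u : CommutatorStruct F) (X : C) :
    (u.u X (𝟙_ C)).hom = F.map ((ρ_ X).hom ≫ (λ_ X).inv) := by
  have h1 := u.hexagon X (𝟙_ C) (𝟙_ C)
  have h2 := u.naturality (𝟙 X) (λ_ (𝟙_ C)).hom
  have h3 := u.naturality (ρ_ X).hom (𝟙 (𝟙_ C))
  have h4 := u.naturality (λ_ X).hom (𝟙 (𝟙_ C))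
  have hα : (α_ (𝟙_ C) (𝟙_ C) X).hom
      = ((λ_ (𝟙_ C)).hom ⊗ₘ 𝟙 X) ≫ (𝟙 (𝟙_ C) ⊗ₘ (λ_ X).inv) := by coherence
  have hτ : (α_ X (𝟙_ C) (𝟙_ C)).hom ≫ (𝟙 X ⊗ₘ (λ_ (𝟙_ C)).hom)
      = ((ρ_ X).hom ⊗ₘ 𝟙 (𝟙_ C)) := by coherence
  have eq1 : (u.u (X ⊗ 𝟙_ C) (𝟙_ C)).hom ≫ F.map (α_ (𝟙_ C) X (𝟙_ C)).inv ≫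
        (u.u ((𝟙_ C) ⊗ X) (𝟙_ C)).hom
      = (u.u (X ⊗ 𝟙_ C) (𝟙_ C)).hom ≫ F.map (𝟙 (𝟙_ C) ⊗ₘ (ρ_ X).hom) ≫
        F.map (𝟙 (𝟙_ C) ⊗ₘ (λ_ X).inv) := by
    rw [← h1, hα, F.map_comp]
    calc F.map (α_ X (𝟙_ C) (𝟙_ C)).hom ≫ (u.u X ((𝟙_ C) ⊗ (𝟙_ C))).hom ≫
          (F.map ((λ_ (𝟙_ C)).hom ⊗ₘ 𝟙 X) ≫ F.map (𝟙 (𝟙_ C) ⊗ₘ (λ_ X).inv))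
        = F.map (α_ X (𝟙_ C) (𝟙_ C)).hom ≫ (F.map (𝟙 X ⊗ₘ (λ_ (𝟙_ C)).hom) ≫
            (u.u X (𝟙_ C)).hom) ≫ F.map (𝟙 (𝟙_ C) ⊗ₘ (λ_ X).inv) := by
          rw [h2]; simp only [Category.assoc]
      _ = F.map ((ρ_ X).hom ⊗ₘ 𝟙 (𝟙_ C)) ≫ (u.u X (𝟙_ C)).hom ≫
            F.map (𝟙 (𝟙_ C) ⊗ₘ (λ_ X).inv) := by
          rw [← Category.assoc, ← Category.assoc, ← F.map_comp, hτ]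
          simp only [Category.assoc]
      _ = (u.u (X ⊗ 𝟙_ C) (𝟙_ C)).hom ≫ F.map (𝟙 (𝟙_ C) ⊗ₘ (ρ_ X).hom) ≫
            F.map (𝟙 (𝟙_ C) ⊗ₘ (λ_ X).inv) := by
          rw [← Category.assoc, h3]; simp only [Category.assoc]
  have c_eq : (u.u ((𝟙_ C) ⊗ X) (𝟙_ C)).hom
      = F.map (α_ (𝟙_ C) X (𝟙_ C)).hom ≫ F.map (𝟙 (𝟙_ C) ⊗ₘ (ρ_ X).hom) ≫
        F.map (𝟙 (𝟙_ C) ⊗ₘ (λ_ X).inv) := by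
    have := (cancel_epi (u.u (X ⊗ 𝟙_ C) (𝟙_ C)).hom).mp eq1
    rw [← this, ← F.map_comp_assoc]
    simp
  have hρ : (α_ (𝟙_ C) X (𝟙_ C)).hom ≫ (𝟙 (𝟙_ C) ⊗ₘ (ρ_ X).hom)
      ≫ (𝟙 (𝟙_ C) ⊗ₘ (λ_ X).inv) ≫ (𝟙 (𝟙_ C) ⊗ₘ (λ_ X).hom)
      = ((λ_ X).hom ⊗ₘ 𝟙 (𝟙_ C)) ≫ (ρ_ X).hom ≫ (λ_ X).inv := by
    coherence
  have h4' : F.map ((λ_ X).hom ⊗ₘ 𝟙 (𝟙_ C)) ≫ (u.u X (𝟙_ C)).hom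
      = F.map ((λ_ X).hom ⊗ₘ 𝟙 (𝟙_ C)) ≫ F.map ((ρ_ X).hom ≫ (λ_ X).inv) := by
    rw [h4, c_eq]
    simp only [Category.assoc, ← F.map_comp]
    rw [← Category.assoc, ← Category.assoc, ← Category.assoc] at hρ
    rw [show (α_ (𝟙_ C) X (𝟙_ C)).hom ≫ (𝟙 (𝟙_ C) ⊗ₘ (ρ_ X).hom) ≫
        (𝟙 (𝟙_ C) ⊗ₘ (λ_ X).inv) ≫ (𝟙 (𝟙_ C) ⊗ₘ (λ_ X).hom)
      = ((λ_ X).hom ⊗ₘ 𝟙 (𝟙_ C)) ≫ (ρ_ X).hom ≫ (λ_ X).inv from by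
        simp only [Category.assoc] at hρ ⊢; exact hρ]
  exact (cancel_epi (F.map ((λ_ X).hom ⊗ₘ 𝟙 (𝟙_ C)))).mp h4'

/-- For a commutator functor `(F, u)`, the endomorphism
`F(ρ_X⁻¹) ≫ u_{X,𝟙} ≫ F(λ_X)` of `F(X)` is idempotent, hence equals the identity. -/
theorem commutator_right_unit_is_identity
    {C : Type*} [Category C] [MonoidalCategory C] {A : Type*} [Category A]
    (F : C ⥤ A) (u : CommutatorStruct F) (X : C) :
    (F.map (ρ_ X).inv ≫ (u.u X (𝟙_ C)).hom ≫ F.map (λ_ X).hom) ≫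
        (F.map (ρ_ X).inv ≫ (u.u X (𝟙_ C)).hom ≫ F.map (λ_ X).hom) =
      F.map (ρ_ X).inv ≫ (u.u X (𝟙_ C)).hom ≫ F.map (λ_ X).hom ∧
    F.map (ρ_ X).inv ≫ (u.u X (𝟙_ C)).hom ≫ F.map (λ_ X).hom = 𝟙 (F.obj X) := by
  have key := commutator_u_unit F u X
  have hid : F.map (ρ_ X).inv ≫ (u.u X (𝟙_ C)).hom ≫ F.map (λ_ X).hom = 𝟙 (F.obj X) := by
    rw [key]
    simp only [← F.map_comp, Category.assoc]
    simp
  exact ⟨by rw [hid]; simp, hid⟩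
end

section
/- Let C be a monoidal category, A a category, and (F, u) a commutator functor from C to A. Then for all objects X, Y of C, the composite u_{X,Y} ≫ u_{Y,X} : F(X⊗Y) → F(Y⊗X) → F(X⊗Y) equals the canonical automorphism of F at X⊗Y, i.e. u_{X,Y} ≫ u_{Y,X} = F(λ_{X⊗Y}⁻¹) ≫ u_{𝟙, X⊗Y} ≫ F(ρ_{X⊗Y}). -/
open CategoryTheory MonoidalCategory

/-- For a commutator functor `(F, u)`, the composite `u_{X,Y} ≫ u_{Y,X}` equals the
canonical automorphism of `F` at `X ⊗ Y`, namely
`F(λ_{X⊗Y}⁻¹) ≫ u_{𝟙, X⊗Y} ≫ F(ρ_{X⊗Y})`. -/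
theorem commutator_double_eq_canonical
    {C : Type*} [Category C] [MonoidalCategory C] {A : Type*} [Category A]
    (F : C ⥤ A) (u : CommutatorStruct F) (X Y : C) :
    (u.u X Y).hom ≫ (u.u Y X).hom =
      F.map (λ_ (X ⊗ Y)).inv ≫ (u.u (𝟙_ C) (X ⊗ Y)).hom ≫ F.map (ρ_ (X ⊗ Y)).hom := by
  have h := u.hexagon (𝟙_ C) X Y
  have n1 : F.map ((λ_ X).inv ▷ Y) ≫ (u.u (𝟙_ C ⊗ X) Y).hom =
      (u.u X Y).hom ≫ F.map (Y ◁ (λ_ X).inv) := by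
    simpa [id_tensorHom, tensorHom_id] using u.naturality (λ_ X).inv (𝟙 Y)
  have n2 : F.map ((ρ_ Y).inv ▷ X) ≫ (u.u (Y ⊗ 𝟙_ C) X).hom =
      (u.u Y X).hom ≫ F.map (X ◁ (ρ_ Y).inv) := by
    simpa [id_tensorHom, tensorHom_id] using u.naturality (ρ_ Y).inv (𝟙 X)
  have tri : Y ◁ (λ_ X).inv ≫ (α_ Y (𝟙_ C) X).inv = (ρ_ Y).inv ▷ X := by
    rw [← cancel_mono ((ρ_ Y).hom ▷ X), ← MonoidalCategory.triangle]
    simp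
  symm
  calc F.map (λ_ (X ⊗ Y)).inv ≫ (u.u (𝟙_ C) (X ⊗ Y)).hom ≫ F.map (ρ_ (X ⊗ Y)).hom
      = F.map ((λ_ X).inv ▷ Y) ≫
        (F.map (α_ (𝟙_ C) X Y).hom ≫ (u.u (𝟙_ C) (X ⊗ Y)).hom ≫
          F.map (α_ X Y (𝟙_ C)).hom) ≫ F.map (X ◁ (ρ_ Y).hom) := by
        rw [leftUnitor_tensor_inv, rightUnitor_tensor_hom]; simp [F.map_comp]
    _ = F.map ((λ_ X).inv ▷ Y) ≫ (u.u (𝟙_ C ⊗ X) Y).hom ≫ F.map (α_ Y (𝟙_ C) X).inv ≫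
        (u.u (Y ⊗ 𝟙_ C) X).hom ≫ F.map (X ◁ (ρ_ Y).hom) := by rw [h]; simp
    _ = (u.u X Y).hom ≫ F.map (Y ◁ (λ_ X).inv ≫ (α_ Y (𝟙_ C) X).inv) ≫
        (u.u (Y ⊗ 𝟙_ C) X).hom ≫ F.map (X ◁ (ρ_ Y).hom) := by
        rw [reassoc_of% n1, F.map_comp]; simp
    _ = (u.u X Y).hom ≫ (u.u Y X).hom ≫ F.map (X ◁ (ρ_ Y).inv) ≫
        F.map (X ◁ (ρ_ Y).hom) := by rw [tri, reassoc_of% n2]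
    _ = (u.u X Y).hom ≫ (u.u Y X).hom := by
        rw [← F.map_comp]; simp
end

section
/- Let C be a rigid monoidal category equipped with a pivotal structure, and suppose that the forgetful functor from the Drinfeld center Z(C) to C admits a right adjoint Ind : C ⥤ Z(C). Then Ind carries a commutator structure, namely the one corresponding under the bijection between central structures on left adjoints and commutator structures on right adjoints to the canonical central structure on the forgetful functor Z(C) ⥤ C whose structural isomorphisms are the half-braidings. -/
open CategoryTheory MonoidalCategory

noncomputable section

/-- A central functor from a category `A` to a monoidal category `C`:
a functor `G : A ⥤ C` equipped with isomorphisms `v a X : G(a) ⊗ X ≅ X ⊗ G(a)`,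
natural in `a` and `X`, satisfying the hexagon compatibility with the associator. -/
structure CentralStruct {A : Type*} [Category A] {C : Type*} [Category C]
    [MonoidalCategory C] (G : A ⥤ C) where
  v : ∀ (a : A) (X : C), G.obj a ⊗ X ≅ X ⊗ G.obj a
  naturality : ∀ {a a' : A} {X X' : C} (f : a ⟶ a') (g : X ⟶ X'),
    (G.map f ⊗ₘ g) ≫ (v a' X').hom = (v a X).hom ≫ (g ⊗ₘ G.map f)
  hexagon : ∀ (a : A) (X Y : C),
    (α_ (G.obj a) X Y).hom ≫ (v a (X ⊗ Y)).hom ≫ (α_ X Y (G.obj a)).hom =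
      ((v a X).hom ⊗ₘ 𝟙 Y) ≫ (α_ X (G.obj a) Y).hom ≫ (𝟙 X ⊗ₘ (v a Y).hom)

variable {C : Type*} [Category C] [MonoidalCategory C] [RigidCategory C]

/-- The canonical morphism `ᘁY ⊗ ᘁX ⟶ ᘁ(X ⊗ Y)` in a rigid monoidal category,
obtained from the evaluation morphisms via the duality adjunctions. -/
def dualTensorCompare (X Y : C) : (ᘁY) ⊗ (ᘁX) ⟶ ᘁ(X ⊗ Y) :=
  (tensorLeftHomEquiv ((ᘁY) ⊗ (ᘁX)) (ᘁ(X ⊗ Y)) (X ⊗ Y) (𝟙_ C)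
      ((α_ (X ⊗ Y) (ᘁY) (ᘁX)).inv ≫ ((α_ X Y (ᘁY)).hom ▷ (ᘁX)) ≫
        ((X ◁ ε_ (ᘁY) Y) ▷ (ᘁX)) ≫ ((ρ_ X).hom ▷ (ᘁX)) ≫ ε_ (ᘁX) X)) ≫
    (ρ_ (ᘁ(X ⊗ Y))).hom

/-- The canonical morphism `ᘁ(X ⊗ Y) ⟶ ᘁY ⊗ ᘁX` in a rigid monoidal category. -/
def dualTensorCompareInv (X Y : C) : (ᘁ(X ⊗ Y) : C) ⟶ (ᘁY) ⊗ (ᘁX) :=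
  tensorLeftHomEquiv (ᘁ(X ⊗ Y)) (ᘁY) Y (ᘁX)
    ((tensorLeftHomEquiv (Y ⊗ ᘁ(X ⊗ Y)) (ᘁX) X (𝟙_ C)
        ((α_ X Y (ᘁ(X ⊗ Y))).inv ≫ ε_ (ᘁ(X ⊗ Y)) (X ⊗ Y))) ≫ (ρ_ (ᘁX)).hom)

/-- The canonical tensorator `ᘁᘁX ⊗ ᘁᘁY ⟶ ᘁᘁ(X ⊗ Y)` of the double (left) dual functor. -/
def doubleDualTensorCompare (X Y : C) : (ᘁ(ᘁX)) ⊗ (ᘁ(ᘁY)) ⟶ ᘁ(ᘁ(X ⊗ Y)) :=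
  dualTensorCompare (ᘁY) (ᘁX) ≫ (ᘁ(dualTensorCompareInv X Y))

/-- A pivotal structure on a rigid monoidal category: a monoidal natural isomorphism
between the identity functor and the double (left) dual functor `X ↦ ᘁᘁX`
(compatibility with the unit is automatic for monoidal natural isomorphisms). -/
structure PivotalStruct (C : Type*) [Category C] [MonoidalCategory C] [RigidCategory C] where
  ψ : ∀ X : C, X ≅ ᘁ(ᘁX)
  naturality : ∀ {X Y : C} (f : X ⟶ Y), f ≫ (ψ Y).hom = (ψ X).hom ≫ (ᘁ(ᘁf))
  tensor : ∀ X Y : C,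
    (ψ (X ⊗ Y)).hom = ((ψ X).hom ⊗ₘ (ψ Y).hom) ≫ doubleDualTensorCompare X Y

variable {A : Type*} [Category A]

/-- Given an adjunction `G ⊣ F` with `C` rigid and pivotal, and a central structure `v` on
`G`, the morphism `F(X ⊗ Y) ⟶ F(Y ⊗ X)` obtained by Yoneda from the chain of bijections
`Hom_A(B, F(X⊗Y)) ≅ Hom_C(G B, X⊗Y) ≅ Hom_C(G B ⊗ ᘁY, X) ≅ Hom_C(ᘁY ⊗ G B, X)` (via `v`)
`≅ Hom_C(G B, ᘁᘁY ⊗ X) ≅ Hom_C(G B, Y ⊗ X)` (via the pivotal structure)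
`≅ Hom_A(B, F(Y⊗X))`, i.e. the image of the identity of `F(X ⊗ Y)` under this chain. -/
def commChainHom (ψ : PivotalStruct C) {G : A ⥤ C} {F : C ⥤ A} (adj : G ⊣ F)
    (v : CentralStruct G) (X Y : C) : F.obj (X ⊗ Y) ⟶ F.obj (Y ⊗ X) :=
  (adj.homEquiv (F.obj (X ⊗ Y)) (Y ⊗ X))
    (((tensorLeftHomEquiv (G.obj (F.obj (X ⊗ Y))) (ᘁ(ᘁY)) (ᘁY) X)
        ((v.v (F.obj (X ⊗ Y)) (ᘁY)).inv ≫
          ((tensorRightHomEquiv (G.obj (F.obj (X ⊗ Y))) (ᘁY) Y X).symm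
            ((adj.homEquiv (F.obj (X ⊗ Y)) (X ⊗ Y)).symm (𝟙 (F.obj (X ⊗ Y))))))) ≫
      ((ψ.ψ Y).inv ⊗ₘ 𝟙 X))

/-- Given an adjunction `G ⊣ F` with `C` rigid and pivotal, and a commutator structure `u` on
`F`, the morphism `G(a) ⊗ X ⟶ X ⊗ G(a)` obtained by Yoneda from the chain of bijections
`Hom_C(G a ⊗ X, W) ≅ Hom_C(G a, W ⊗ ᘁX) ≅ Hom_A(a, F(W ⊗ ᘁX)) ≅ Hom_A(a, F(ᘁX ⊗ W))`
(via `u`) `≅ Hom_C(G a, ᘁX ⊗ W) ≅ Hom_C(X ⊗ G a, W)`, i.e. the image of the identity of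
`X ⊗ G(a)` under the inverse chain. -/
def centralChainHom (ψ : PivotalStruct C) {G : A ⥤ C} {F : C ⥤ A} (adj : G ⊣ F)
    (u : CommutatorStruct F) (a : A) (X : C) : G.obj a ⊗ X ⟶ X ⊗ G.obj a :=
  (𝟙 (G.obj a) ⊗ₘ (ψ.ψ X).hom) ≫
    (tensorRightHomEquiv (G.obj a) (ᘁ(ᘁX)) (ᘁX) (X ⊗ G.obj a)).symm
      ((adj.homEquiv a ((X ⊗ G.obj a) ⊗ (ᘁX))).symm
        (((adj.homEquiv a ((ᘁX) ⊗ (X ⊗ G.obj a)))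
            ((tensorLeftHomEquiv (G.obj a) (ᘁX) X (X ⊗ G.obj a)) (𝟙 (X ⊗ G.obj a)))) ≫
          (u.u (ᘁX) (X ⊗ G.obj a)).hom))

/-- The canonical central structure on the forgetful functor from the Drinfeld center,
whose structural isomorphisms are the half-braidings. -/
def forgetCentral : CentralStruct (Center.forget C) where
  v a X := a.2.β X
  naturality {a a' X X'} f g := by
    change (f.f ⊗ₘ g) ≫ (a'.2.β X').hom = (a.2.β X).hom ≫ (g ⊗ₘ f.f)
    rw [MonoidalCategory.tensorHom_def, Category.assoc, HalfBraiding.naturality,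
      ← Category.assoc, Center.Hom.comm, Category.assoc, MonoidalCategory.tensorHom_def' g f.f]
  hexagon a X Y := by
    simp [MonoidalCategory.tensorHom_def, tensorHom_def', HalfBraiding.monoidal, Center.forget]


/-! ### Construction: a central structure on a left adjoint induces a commutator
structure on the right adjoint. -/

section CommutatorOfCentral

/-- The pivotal coevaluation `𝟙 ⟶ Y ⊗ ᘁY`. -/
def ptEta (pv : PivotalStruct C) (Y : C) : 𝟙_ C ⟶ Y ⊗ (ᘁY) :=
  η_ (ᘁ(ᘁY)) (ᘁY) ≫ ((pv.ψ Y).inv ▷ (ᘁY))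

lemma whiskerLeft_eval_injective {Z M : C} [HasLeftDual Z] {h₁ h₂ : M ⟶ (ᘁZ : C)}
    (H : Z ◁ h₁ ≫ ε_ (ᘁZ) Z = Z ◁ h₂ ≫ ε_ (ᘁZ) Z) : h₁ = h₂ := by
  have h := congrArg (tensorLeftHomEquiv M (ᘁZ : C) Z (𝟙_ C)) H
  rw [tensorLeftHomEquiv_whiskerLeft_comp_evaluation,
    tensorLeftHomEquiv_whiskerLeft_comp_evaluation] at h
  exact (cancel_mono (ρ_ (ᘁZ : C)).inv).mp h

lemma dtc_eval (X Y : C) :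
    ((X ⊗ Y) ◁ dualTensorCompare X Y) ≫ ε_ (ᘁ(X ⊗ Y)) (X ⊗ Y) =
      (α_ (X ⊗ Y) (ᘁY) (ᘁX)).inv ≫ ((α_ X Y (ᘁY)).hom ▷ (ᘁX)) ≫
        ((X ◁ ε_ (ᘁY) Y) ▷ (ᘁX)) ≫ ((ρ_ X).hom ▷ (ᘁX)) ≫ ε_ (ᘁX) X := by
  apply (tensorLeftHomEquiv ((ᘁY : C) ⊗ (ᘁX)) (ᘁ(X ⊗ Y)) (X ⊗ Y) (𝟙_ C)).injective
  rw [tensorLeftHomEquiv_whiskerLeft_comp_evaluation]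
  simp [dualTensorCompare]

/-- The inner morphism used in the definition of `dualTensorCompareInv`. -/
def mAux (X Y : C) : Y ⊗ (ᘁ(X ⊗ Y) : C) ⟶ (ᘁX : C) :=
  (tensorLeftHomEquiv (Y ⊗ ᘁ(X ⊗ Y)) (ᘁX) X (𝟙_ C)
      ((α_ X Y (ᘁ(X ⊗ Y))).inv ≫ ε_ (ᘁ(X ⊗ Y)) (X ⊗ Y))) ≫ (ρ_ (ᘁX)).hom

lemma dtcInv_eq (X Y : C) :
    dualTensorCompareInv X Y = tensorLeftHomEquiv (ᘁ(X ⊗ Y)) (ᘁY) Y (ᘁX) (mAux X Y) := rfl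

lemma mAux_eval (X Y : C) :
    (X ◁ mAux X Y) ≫ ε_ (ᘁX) X =
      (α_ X Y (ᘁ(X ⊗ Y))).inv ≫ ε_ (ᘁ(X ⊗ Y)) (X ⊗ Y) := by
  apply (tensorLeftHomEquiv (Y ⊗ (ᘁ(X ⊗ Y) : C)) (ᘁX : C) X (𝟙_ C)).injective
  rw [tensorLeftHomEquiv_whiskerLeft_comp_evaluation]
  simp [mAux]

lemma dtcInv_symm (X Y : C) :
    Y ◁ dualTensorCompareInv X Y ≫ (α_ Y (ᘁY) (ᘁX)).inv ≫ (ε_ (ᘁY) Y ▷ (ᘁX)) ≫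
      (λ_ (ᘁX)).hom = mAux X Y := by
  have h : (tensorLeftHomEquiv (ᘁ(X ⊗ Y)) (ᘁY) Y (ᘁX)).symm (dualTensorCompareInv X Y) =
      mAux X Y := by
    rw [dtcInv_eq, Equiv.symm_apply_apply]
  simpa [tensorLeftHomEquiv] using h

lemma dtcInv_eval (X Y : C) :
    ((X ⊗ Y) ◁ dualTensorCompareInv X Y) ≫ (α_ (X ⊗ Y) (ᘁY) (ᘁX)).inv ≫
        ((α_ X Y (ᘁY)).hom ▷ (ᘁX)) ≫ ((X ◁ ε_ (ᘁY) Y) ▷ (ᘁX)) ≫ ((ρ_ X).hom ▷ (ᘁX)) ≫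
        ε_ (ᘁX) X =
      ε_ (ᘁ(X ⊗ Y)) (X ⊗ Y) := by
  calc ((X ⊗ Y) ◁ dualTensorCompareInv X Y) ≫ (α_ (X ⊗ Y) (ᘁY) (ᘁX)).inv ≫
        ((α_ X Y (ᘁY)).hom ▷ (ᘁX)) ≫ ((X ◁ ε_ (ᘁY) Y) ▷ (ᘁX)) ≫ ((ρ_ X).hom ▷ (ᘁX)) ≫
        ε_ (ᘁX) X
      = (α_ X Y (ᘁ(X ⊗ Y))).hom ≫ (X ◁ (Y ◁ dualTensorCompareInv X Y ≫
          (α_ Y (ᘁY) (ᘁX)).inv ≫ (ε_ (ᘁY) Y ▷ (ᘁX)) ≫ (λ_ (ᘁX)).hom)) ≫ ε_ (ᘁX) X := by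
        monoidal
    _ = (α_ X Y (ᘁ(X ⊗ Y))).hom ≫ (X ◁ mAux X Y) ≫ ε_ (ᘁX) X := by rw [dtcInv_symm]
    _ = ε_ (ᘁ(X ⊗ Y)) (X ⊗ Y) := by rw [mAux_eval]; simp

lemma dtcInv_comp_dtc (X Y : C) :
    dualTensorCompareInv X Y ≫ dualTensorCompare X Y = 𝟙 (ᘁ(X ⊗ Y) : C) := by
  apply whiskerLeft_eval_injective (Z := X ⊗ Y)
  rw [MonoidalCategory.whiskerLeft_comp, MonoidalCategory.whiskerLeft_id, Category.id_comp,
    Category.assoc, dtc_eval]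
  exact dtcInv_eval X Y

lemma zigzagS (X Y : C) :
    (ρ_ Y).inv ≫ (Y ◁ η_ (ᘁ(X ⊗ Y)) (X ⊗ Y)) ≫ (α_ Y (ᘁ(X ⊗ Y)) (X ⊗ Y)).inv ≫
        (mAux X Y ▷ (X ⊗ Y)) =
      (λ_ Y).inv ≫ (η_ (ᘁX) X ▷ Y) ≫ (α_ (ᘁX) X Y).hom := by
  have hR : (λ_ Y).inv ≫ (η_ (ᘁX) X ▷ Y) ≫ (α_ (ᘁX) X Y).hom =
      tensorLeftHomEquiv Y (ᘁX : C) X (X ⊗ Y) (𝟙 (X ⊗ Y)) := by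
    simp [tensorLeftHomEquiv]
  rw [hR, ← Equiv.symm_apply_eq]
  dsimp [tensorLeftHomEquiv]
  trans (𝟙 (X ⊗ Y) ⊗≫ (X ◁ (Y ◁ η_ (ᘁ(X ⊗ Y)) (X ⊗ Y))) ⊗≫
    (((X ◁ mAux X Y) ≫ ε_ (ᘁX) X) ▷ (X ⊗ Y)) ⊗≫ 𝟙 (X ⊗ Y))
  · monoidal
  rw [mAux_eval]
  trans (𝟙 (X ⊗ Y) ⊗≫ (((X ⊗ Y) ◁ η_ (ᘁ(X ⊗ Y)) (X ⊗ Y)) ≫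
    (α_ (X ⊗ Y) (ᘁ(X ⊗ Y)) (X ⊗ Y)).inv ≫ (ε_ (ᘁ(X ⊗ Y)) (X ⊗ Y) ▷ (X ⊗ Y))) ⊗≫ 𝟙 (X ⊗ Y))
  · monoidal
  rw [ExactPairing.coevaluation_evaluation]
  monoidal

set_option maxHeartbeats 1000000 in
lemma coev_dtcInv (X Y : C) :
    η_ (ᘁ(X ⊗ Y)) (X ⊗ Y) ≫ (dualTensorCompareInv X Y ▷ (X ⊗ Y)) =
      η_ (ᘁY) Y ≫ ((ᘁY) ◁ ((λ_ Y).inv ≫ (η_ (ᘁX) X ▷ Y) ≫ (α_ (ᘁX) X Y).hom)) ≫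
        (α_ (ᘁY) (ᘁX) (X ⊗ Y)).inv := by
  rw [dtcInv_eq]
  dsimp [tensorLeftHomEquiv]
  trans (𝟙 (𝟙_ C) ⊗≫ ((𝟙_ C ◁ η_ (ᘁ(X ⊗ Y)) (X ⊗ Y)) ≫
      (η_ (ᘁY) Y ▷ ((ᘁ(X ⊗ Y)) ⊗ (X ⊗ Y)))) ⊗≫
    ((ᘁY) ◁ (mAux X Y ▷ (X ⊗ Y))) ⊗≫ 𝟙 (((ᘁY) ⊗ (ᘁX)) ⊗ (X ⊗ Y)))
  · monoidal
  rw [whisker_exchange]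
  trans (𝟙 (𝟙_ C) ⊗≫ η_ (ᘁY) Y ⊗≫ ((ᘁY) ◁ ((ρ_ Y).inv ≫ (Y ◁ η_ (ᘁ(X ⊗ Y)) (X ⊗ Y)) ≫
      (α_ Y (ᘁ(X ⊗ Y)) (X ⊗ Y)).inv ≫ (mAux X Y ▷ (X ⊗ Y)))) ⊗≫
    𝟙 (((ᘁY) ⊗ (ᘁX)) ⊗ (X ⊗ Y)))
  · monoidal
  rw [zigzagS]
  monoidal

lemma tLHE_nat_left {X X' Y Y' Z : C} [ExactPairing Y Y'] (f : X ⟶ X') (g : Y' ⊗ X' ⟶ Z) :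
    tensorLeftHomEquiv X Y Y' Z (Y' ◁ f ≫ g) = f ≫ tensorLeftHomEquiv X' Y Y' Z g := by
  dsimp [tensorLeftHomEquiv]
  trans (𝟙 X ⊗≫ ((η_ Y Y' ▷ X) ≫ ((Y ⊗ Y') ◁ f)) ⊗≫ (Y ◁ g) ⊗≫ 𝟙 (Y ⊗ Z))
  · monoidal
  rw [← whisker_exchange]
  monoidal

lemma ptEta_nat (pv : PivotalStruct C) {Y Y' : C} (g : Y ⟶ Y') :
    ptEta pv Y' ≫ (Y' ◁ (ᘁg)) = ptEta pv Y ≫ (g ▷ (ᘁY)) := by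
  have hg : (ᘁ(ᘁg)) ≫ (pv.ψ Y').inv = (pv.ψ Y).inv ≫ g := by
    rw [Iso.comp_inv_eq, Category.assoc, pv.naturality g, Iso.inv_hom_id_assoc]
  dsimp only [ptEta]
  rw [Category.assoc, ← whisker_exchange, ← Category.assoc,
    ← coevaluation_comp_leftAdjointMate, Category.assoc, ← comp_whiskerRight, hg,
    comp_whiskerRight, Category.assoc]

lemma dtcInv_psi (pv : PivotalStruct C) (Y Z : C) :
    (ᘁ(dualTensorCompareInv Y Z)) ≫ (pv.ψ (Y ⊗ Z)).inv =
      dualTensorCompareInv (ᘁZ) (ᘁY) ≫ ((pv.ψ Y).inv ⊗ₘ (pv.ψ Z).inv) := by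
  rw [Iso.comp_inv_eq, pv.tensor]
  dsimp only [doubleDualTensorCompare]
  rw [Category.assoc, tensorHom_comp_tensorHom_assoc, Iso.inv_hom_id, Iso.inv_hom_id, id_tensorHom_id,
    Category.id_comp, ← Category.assoc, dtcInv_comp_dtc, Category.id_comp]

lemma ptEta_tensor (pv : PivotalStruct C) (Y Z : C) :
    ptEta pv (Y ⊗ Z) ≫ ((Y ⊗ Z) ◁ dualTensorCompareInv Y Z) =
      ptEta pv Y ≫ (Y ◁ ((λ_ (ᘁY)).inv ≫ (ptEta pv Z ▷ (ᘁY)) ≫ (α_ Z (ᘁZ) (ᘁY)).hom)) ≫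
        (α_ Y Z ((ᘁZ) ⊗ (ᘁY))).inv := by
  dsimp only [ptEta]
  rw [Category.assoc, ← whisker_exchange, ← Category.assoc,
    ← coevaluation_comp_leftAdjointMate, Category.assoc, ← comp_whiskerRight,
    dtcInv_psi pv Y Z, comp_whiskerRight, ← Category.assoc, coev_dtcInv, MonoidalCategory.tensorHom_def]
  trans (𝟙 (𝟙_ C) ⊗≫ η_ (ᘁ(ᘁY)) (ᘁY) ⊗≫
    ((((ᘁ(ᘁY)) ◁ (η_ (ᘁ(ᘁZ)) (ᘁZ) ▷ (ᘁY)))) ≫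
      ((pv.ψ Y).inv ▷ (((ᘁ(ᘁZ)) ⊗ (ᘁZ)) ⊗ (ᘁY)))) ⊗≫
    (Y ◁ (((pv.ψ Z).inv ▷ (ᘁZ)) ▷ (ᘁY))) ⊗≫ 𝟙 ((Y ⊗ Z) ⊗ ((ᘁZ) ⊗ (ᘁY))))
  · monoidal
  rw [whisker_exchange]
  monoidal

variable {G : A ⥤ C} {F : C ⥤ A}

lemma vinv_nat (v : CentralStruct G) (B : A) {P Q : C} (g : P ⟶ Q) :
    (g ▷ G.obj B) ≫ (v.v B Q).inv = (v.v B P).inv ≫ (G.obj B ◁ g) := by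
  have h := v.naturality (𝟙 B) g
  simp at h
  rw [Iso.comp_inv_eq, Category.assoc, h, Iso.inv_hom_id_assoc]

lemma vinv_tensor (v : CentralStruct G) (B : A) (P Q : C) :
    (v.v B (P ⊗ Q)).inv =
      (α_ P Q (G.obj B)).hom ≫ (P ◁ (v.v B Q).inv) ≫ (α_ P (G.obj B) Q).inv ≫
        ((v.v B P).inv ▷ Q) ≫ (α_ (G.obj B) P Q).hom := by
  have h := v.hexagon B P Q
  simp only [CategoryTheory.MonoidalCategory.id_tensorHom,
    CategoryTheory.MonoidalCategory.tensorHom_id] at h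
  rw [← cancel_epi ((v.v B (P ⊗ Q)).hom), Iso.hom_inv_id]
  have h' : (v.v B (P ⊗ Q)).hom ≫ (α_ P Q (G.obj B)).hom =
      (α_ (G.obj B) P Q).inv ≫ ((v.v B P).hom ▷ Q) ≫ (α_ P (G.obj B) Q).hom ≫
        (P ◁ (v.v B Q).hom) := by
    rw [← h]; simp
  rw [← Category.assoc, h']
  simp

/-- The basic one-sided rotation on hom-sets induced by a central structure and a pivotal
structure. -/
def phi (pv : PivotalStruct C) (v : CentralStruct G) (B : A) (X Y : C)
    (k : G.obj B ⟶ X ⊗ Y) : G.obj B ⟶ Y ⊗ X :=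
  (tensorLeftHomEquiv (G.obj B) (ᘁ(ᘁY)) (ᘁY) X)
      ((v.v B (ᘁY)).inv ≫ (tensorRightHomEquiv (G.obj B) (ᘁY) Y X).symm k) ≫
    ((pv.ψ Y).inv ⊗ₘ 𝟙 X)

lemma phi_eq (pv : PivotalStruct C) (v : CentralStruct G) (B : A) (X Y : C)
    (k : G.obj B ⟶ X ⊗ Y) :
    phi pv v B X Y k =
      (λ_ (G.obj B)).inv ≫ (ptEta pv Y ▷ G.obj B) ≫ (α_ Y (ᘁY) (G.obj B)).hom ≫
        Y ◁ ((v.v B (ᘁY)).inv ≫ (k ▷ (ᘁY)) ≫ (α_ X Y (ᘁY)).hom ≫ (X ◁ ε_ (ᘁY) Y) ≫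
          (ρ_ X).hom) := by
  dsimp only [phi, ptEta]
  simp only [tensorLeftHomEquiv, tensorRightHomEquiv, Equiv.coe_fn_mk, Equiv.coe_fn_symm_mk,
    tensorHom_id]
  trans (𝟙 (G.obj B) ⊗≫ (η_ (ᘁ(ᘁY)) (ᘁY) ▷ G.obj B) ⊗≫
    (((ᘁ(ᘁY)) ◁ ((v.v B (ᘁY)).inv ≫ (k ▷ (ᘁY) ≫ (α_ X Y (ᘁY)).hom ≫ (X ◁ ε_ (ᘁY) Y) ≫
        (ρ_ X).hom))) ≫ ((pv.ψ Y).inv ▷ X)) ⊗≫ 𝟙 (Y ⊗ X))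
  · monoidal
  rw [whisker_exchange]
  monoidal

lemma phi_natural_left (pv : PivotalStruct C) (v : CentralStruct G) {B B' : A} (h : B' ⟶ B)
    (X Y : C) (k : G.obj B ⟶ X ⊗ Y) :
    phi pv v B' X Y (G.map h ≫ k) = G.map h ≫ phi pv v B X Y k := by
  have hv : (v.v B' (ᘁY)).inv ≫ (G.map h ▷ (ᘁY)) = ((ᘁY) ◁ G.map h) ≫ (v.v B (ᘁY)).inv := by
    have h' := v.naturality h (𝟙 (ᘁY : C))
    simp at h'
    rw [Iso.inv_comp_eq, ← Category.assoc, ← h', Category.assoc, Iso.hom_inv_id,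
      Category.comp_id]
  dsimp only [phi]
  rw [tensorRightHomEquiv_symm_naturality, ← Category.assoc, hv, Category.assoc,
    tLHE_nat_left, Category.assoc]

/-- `phi` as an equivalence of hom-sets. -/
def phiE (pv : PivotalStruct C) (v : CentralStruct G) (B : A) (X Y : C) :
    (G.obj B ⟶ X ⊗ Y) ≃ (G.obj B ⟶ Y ⊗ X) :=
  ((tensorRightHomEquiv (G.obj B) (ᘁY) Y X).symm.trans
    ((Iso.homCongr (v.v B (ᘁY)) (Iso.refl X)).trans
      ((tensorLeftHomEquiv (G.obj B) (ᘁ(ᘁY)) (ᘁY) X).trans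
        (Iso.homCongr (Iso.refl (G.obj B)) (tensorIso (pv.ψ Y).symm (Iso.refl X))))))

lemma phiE_apply (pv : PivotalStruct C) (v : CentralStruct G) (B : A) (X Y : C)
    (k : G.obj B ⟶ X ⊗ Y) : phiE pv v B X Y k = phi pv v B X Y k := by
  simp [phiE, phi, Iso.homCongr]

lemma phi_dinat (pv : PivotalStruct C) (v : CentralStruct G) (B : A) {X X' Y Y' : C}
    (k : G.obj B ⟶ X ⊗ Y) (f : X ⟶ X') (g : Y ⟶ Y') :
    phi pv v B X' Y' (k ≫ (f ⊗ₘ g)) = phi pv v B X Y k ≫ (g ⊗ₘ f) := by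
  have hT1 : ((k ≫ (f ⊗ₘ g)) ▷ (ᘁY')) ≫ (α_ X' Y' (ᘁY')).hom ≫ (X' ◁ ε_ (ᘁY') Y') ≫
      (ρ_ X').hom =
      (G.obj B ◁ (ᘁg)) ≫ (k ▷ (ᘁY)) ≫ (α_ X Y (ᘁY)).hom ≫ (X ◁ ε_ (ᘁY) Y) ≫
        (ρ_ X).hom ≫ f := by
    trans (𝟙 (G.obj B ⊗ (ᘁY')) ⊗≫ (k ▷ (ᘁY')) ⊗≫ (X ◁ (g ▷ (ᘁY'))) ⊗≫
      ((f ▷ (Y' ⊗ (ᘁY'))) ≫ (X' ◁ ε_ (ᘁY') Y')) ⊗≫ 𝟙 X')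
    · rw [tensorHom_def']; monoidal
    rw [← whisker_exchange]
    trans (𝟙 (G.obj B ⊗ (ᘁY')) ⊗≫ (k ▷ (ᘁY')) ⊗≫ (X ◁ ((g ▷ (ᘁY')) ≫ ε_ (ᘁY') Y')) ⊗≫
      f ⊗≫ 𝟙 X')
    · monoidal
    rw [← leftAdjointMate_comp_evaluation]
    trans (𝟙 (G.obj B ⊗ (ᘁY')) ⊗≫ ((k ▷ (ᘁY')) ≫ ((X ⊗ Y) ◁ (ᘁg))) ⊗≫
      (X ◁ ε_ (ᘁY) Y) ⊗≫ f ⊗≫ 𝟙 X')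
    · monoidal
    rw [← whisker_exchange]
    monoidal
  rw [phi_eq, phi_eq, hT1, ← reassoc_of% (vinv_nat v B (leftAdjointMate g))]
  trans (𝟙 (G.obj B) ⊗≫ ((ptEta pv Y' ≫ (Y' ◁ (ᘁg))) ▷ G.obj B) ⊗≫
    (Y' ◁ ((v.v B (ᘁY)).inv ≫ (k ▷ (ᘁY)) ≫ (α_ X Y (ᘁY)).hom ≫ (X ◁ ε_ (ᘁY) Y) ≫
      (ρ_ X).hom ≫ f)) ⊗≫ 𝟙 (Y' ⊗ X'))
  · monoidal
  rw [ptEta_nat]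
  trans (𝟙 (G.obj B) ⊗≫ (ptEta pv Y ▷ G.obj B) ⊗≫
    ((g ▷ ((ᘁY) ⊗ G.obj B)) ≫ (Y' ◁ ((v.v B (ᘁY)).inv ≫ (k ▷ (ᘁY)) ≫ (α_ X Y (ᘁY)).hom ≫
      (X ◁ ε_ (ᘁY) Y) ≫ (ρ_ X).hom ≫ f))) ⊗≫ 𝟙 (Y' ⊗ X'))
  · monoidal
  rw [← whisker_exchange, tensorHom_def']
  monoidal

lemma phi_hex (pv : PivotalStruct C) (v : CentralStruct G) (B : A) (X Y Z : C)
    (k : G.obj B ⟶ (X ⊗ Y) ⊗ Z) :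
    phi pv v B X (Y ⊗ Z) (k ≫ (α_ X Y Z).hom) ≫ (α_ Y Z X).hom =
      phi pv v B (Z ⊗ X) Y (phi pv v B (X ⊗ Y) Z k ≫ (α_ Z X Y).inv) := by
  have hd : ptEta pv (Y ⊗ Z) =
      (ptEta pv (Y ⊗ Z) ≫ ((Y ⊗ Z) ◁ dualTensorCompareInv Y Z)) ≫
        ((Y ⊗ Z) ◁ dualTensorCompare Y Z) := by
    rw [Category.assoc, ← MonoidalCategory.whiskerLeft_comp, dtcInv_comp_dtc,
      MonoidalCategory.whiskerLeft_id, Category.comp_id]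
  have hT0 : (G.obj B ◁ dualTensorCompare Y Z) ≫ ((k ≫ (α_ X Y Z).hom) ▷ (ᘁ(Y ⊗ Z))) ≫
      (α_ X (Y ⊗ Z) (ᘁ(Y ⊗ Z))).hom ≫ (X ◁ ε_ (ᘁ(Y ⊗ Z)) (Y ⊗ Z)) ≫ (ρ_ X).hom =
      ((k ≫ (α_ X Y Z).hom) ▷ ((ᘁZ) ⊗ (ᘁY))) ≫ (α_ X (Y ⊗ Z) ((ᘁZ) ⊗ (ᘁY))).hom ≫
        (X ◁ ((α_ (Y ⊗ Z) (ᘁZ) (ᘁY)).inv ≫ ((α_ Y Z (ᘁZ)).hom ▷ (ᘁY)) ≫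
          ((Y ◁ ε_ (ᘁZ) Z) ▷ (ᘁY)) ≫ ((ρ_ Y).hom ▷ (ᘁY)) ≫ ε_ (ᘁY) Y)) ≫ (ρ_ X).hom := by
    rw [← dtc_eval, ← Category.assoc, whisker_exchange, Category.assoc,
      MonoidalCategory.whiskerLeft_comp,
      reassoc_of% (associator_naturality_right X (Y ⊗ Z) (dualTensorCompare Y Z))]
    simp only [Category.assoc]
  rw [phi_eq pv v B X (Y ⊗ Z) (k ≫ (α_ X Y Z).hom), phi_eq pv v B (Z ⊗ X) Y,
    phi_eq pv v B (X ⊗ Y) Z k, hd, ptEta_tensor]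
  trans (𝟙 (G.obj B) ⊗≫ (ptEta pv Y ▷ G.obj B) ⊗≫
    (Y ◁ (ptEta pv Z ▷ ((ᘁY) ⊗ G.obj B))) ⊗≫
    ((Y ⊗ Z) ◁ ((dualTensorCompare Y Z ▷ G.obj B) ≫ (v.v B (ᘁ(Y ⊗ Z))).inv ≫
      ((k ≫ (α_ X Y Z).hom) ▷ (ᘁ(Y ⊗ Z))) ≫ (α_ X (Y ⊗ Z) (ᘁ(Y ⊗ Z))).hom ≫
      (X ◁ ε_ (ᘁ(Y ⊗ Z)) (Y ⊗ Z)) ≫ (ρ_ X).hom)) ⊗≫ 𝟙 (Y ⊗ (Z ⊗ X)))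
  · monoidal
  rw [reassoc_of% (vinv_nat v B (dualTensorCompare Y Z)), hT0,
    vinv_tensor v B (ᘁZ : C) (ᘁY : C)]
  trans (𝟙 (G.obj B) ⊗≫ (ptEta pv Y ▷ G.obj B) ⊗≫
    (Y ◁ ((ptEta pv Z ▷ ((ᘁY) ⊗ G.obj B)) ≫ ((Z ⊗ (ᘁZ)) ◁ (v.v B (ᘁY)).inv))) ⊗≫
    (Y ◁ (Z ◁ ((v.v B (ᘁZ)).inv ▷ (ᘁY)))) ⊗≫
    (Y ◁ (Z ◁ ((k ≫ (α_ X Y Z).hom) ▷ ((ᘁZ) ⊗ (ᘁY))))) ⊗≫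
    (Y ◁ (Z ◁ (X ◁ ((Y ◁ ε_ (ᘁZ) Z) ▷ (ᘁY))))) ⊗≫
    (Y ◁ (Z ◁ (X ◁ ε_ (ᘁY) Y))) ⊗≫ 𝟙 (Y ⊗ (Z ⊗ X)))
  · monoidal
  rw [← whisker_exchange]
  monoidal

variable (pv : PivotalStruct C) (adj : G ⊣ F) (v : CentralStruct G)

/-- The hom-set chain equivalence defining the commutator structure. -/
def chainE (B : A) (X Y : C) : (B ⟶ F.obj (X ⊗ Y)) ≃ (B ⟶ F.obj (Y ⊗ X)) :=
  (adj.homEquiv B (X ⊗ Y)).symm.trans ((phiE pv v B X Y).trans (adj.homEquiv B (Y ⊗ X)))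

lemma chainE_apply (B : A) (X Y : C) (f : B ⟶ F.obj (X ⊗ Y)) :
    chainE pv adj v B X Y f =
      (adj.homEquiv B (Y ⊗ X)) (phi pv v B X Y ((adj.homEquiv B (X ⊗ Y)).symm f)) := by
  simp [chainE, phiE_apply]

lemma chainE_nat (B B' : A) (X Y : C) (h : B' ⟶ B) (f : B ⟶ F.obj (X ⊗ Y)) :
    chainE pv adj v B' X Y (h ≫ f) = h ≫ chainE pv adj v B X Y f := by
  rw [chainE_apply, chainE_apply, Adjunction.homEquiv_naturality_left_symm,
    phi_natural_left, Adjunction.homEquiv_naturality_left]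

lemma comm_eq (X Y : C) :
    commChainHom pv adj v X Y = chainE pv adj v (F.obj (X ⊗ Y)) X Y (𝟙 (F.obj (X ⊗ Y))) := by
  rw [chainE_apply]; rfl

lemma comp_comm_eq {B : A} (X Y : C) (f : B ⟶ F.obj (X ⊗ Y)) :
    f ≫ commChainHom pv adj v X Y = chainE pv adj v B X Y f := by
  rw [comm_eq, ← chainE_nat, Category.comp_id]

/-- The commutator structure on the right adjoint induced by a central structure on the
left adjoint. -/
def commutatorOfCentral : CommutatorStruct F where
  u X Y :=
    { hom := commChainHom pv adj v X Y
      inv := (chainE pv adj v (F.obj (Y ⊗ X)) X Y).symm (𝟙 (F.obj (Y ⊗ X)))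
      hom_inv_id := by
        apply (chainE pv adj v (F.obj (X ⊗ Y)) X Y).injective
        rw [chainE_nat pv adj v _ _ X Y (commChainHom pv adj v X Y)
            ((chainE pv adj v (F.obj (Y ⊗ X)) X Y).symm (𝟙 (F.obj (Y ⊗ X)))),
          Equiv.apply_symm_apply, Category.comp_id, ← comm_eq]
      inv_hom_id := by
        rw [comp_comm_eq, Equiv.apply_symm_apply] }
  naturality {X X' Y Y'} f g := by
    dsimp only
    rw [comp_comm_eq, chainE_apply, comm_eq, chainE_apply,
      ← Adjunction.homEquiv_naturality_right, ← phi_dinat,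
      ← Adjunction.homEquiv_naturality_right_symm, Category.id_comp]
  hexagon X Y Z := by
    dsimp only
    conv_lhs => rw [← Category.assoc, comp_comm_eq, chainE_apply,
      ← Adjunction.homEquiv_naturality_right,
      ← Category.id_comp (F.map (α_ X Y Z).hom),
      Adjunction.homEquiv_naturality_right_symm]
    conv_rhs => rw [← Category.assoc, comp_comm_eq, chainE_apply,
      Adjunction.homEquiv_naturality_right_symm, comm_eq, chainE_apply,
      Equiv.symm_apply_apply]
    exact congrArg _ (phi_hex pv v _ X Y Z _)

lemma commutatorOfCentral_hom (X Y : C) :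
    ((commutatorOfCentral pv adj v).u X Y).hom = commChainHom pv adj v X Y := rfl

end CommutatorOfCentral

/-- If `C` is rigid and pivotal and the forgetful functor from the Drinfeld center admits a
right adjoint `Ind : C ⥤ Z(C)`, then `Ind` carries a commutator structure, namely the one
corresponding (under the bijection between central structures on left adjoints and commutator
structures on right adjoints) to the canonical central structure on the forgetful functor
given by the half-braidings. -/
theorem ind_commutator (ψ : PivotalStruct C) (Ind : C ⥤ CategoryTheory.Center C)
    (adj : Center.forget C ⊣ Ind) :
    ∃ u : CommutatorStruct Ind,
      ∀ X Y : C, (u.u X Y).hom = commChainHom ψ adj forgetCentral X Y :=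
  ⟨commutatorOfCentral ψ adj forgetCentral, fun X Y => rfl⟩

end
end
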